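/- Let k ≥ 0 be an integer and let g : [0,1] → ℝ be continuous, strictly positive, and strictly decreasing. Then (−1)^{k+1} · ∫_0^1 g(x) B_{2k+1}(x) dx > 0, where B_{2k+1} is the (2k+1)-st Bernoulli polynomial; that is, the sign of ∫_0^1 g(x) B_{2k+1}(x) dx is (−1)^{k−1}. -/

import Mathlib

open Set intervalIntegral

lemma bern1 (x : ℝ) : bernoulliFun 1 x = x - 1/2 := by
  simp [bernoulliFun, Polynomial.bernoulli]
  rw [Finset.sum_range_succ, Finset.sum_range_one]
  norm_num [bernoulli_one]
  ring

lemma bernoulliFun_continuous (n : ℕ) : Continuous (bernoulliFun n) :=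
  (Polynomial.map (algebraMap ℚ ℝ) (Polynomial.bernoulli n)).continuous

lemma bern_reflect_step (n : ℕ)
    (ih : ∀ x : ℝ, bernoulliFun n (1 - x) = (-1 : ℝ) ^ n * bernoulliFun n x) (x : ℝ) :
    bernoulliFun (n+1) (1 - x) = (-1 : ℝ) ^ (n+1) * bernoulliFun (n+1) x := by
  set h : ℝ → ℝ := fun y => bernoulliFun (n+1) (1 - y) - (-1 : ℝ) ^ (n+1) * bernoulliFun (n+1) y
    with hh
  have key : ∀ y : ℝ, HasDerivAt h 0 y := by
    intro y
    have d1 : HasDerivAt (fun y : ℝ => bernoulliFun (n+1) (1 - y))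
        (((n+1 : ℕ) : ℝ) * bernoulliFun n (1 - y) * (-1)) y := by
      exact (hasDerivAt_bernoulliFun (n+1) (1 - y)).comp y
        (((hasDerivAt_id y).const_sub 1))
    have d2 := (hasDerivAt_bernoulliFun (n+1) y).const_mul ((-1 : ℝ) ^ (n+1))
    have := d1.sub d2
    refine this.congr_deriv ?_
    rw [ih y]
    push_cast
    ring
  have hconst : h x = h 0 :=
    is_const_of_deriv_eq_zero (fun y => (key y).differentiableAt)
      (fun y => (key y).deriv) x 0
  have h0 : h 0 = 0 := by
    simp only [hh, sub_zero]
    rcases Nat.even_or_odd (n+1) with he | ho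
    · rw [bernoulliFun_endpoints_eq_of_ne_one (by intro e; rw [e] at he; simp at he), he.neg_one_pow]
      ring
    · rcases eq_or_ne (n+1) 1 with h1 | h1
      · rw [h1]
        have := bernoulliFun_eval_one 1
        simp only [if_pos rfl] at this
        rw [this, bernoulliFun_eval_zero, bernoulli_one]
        norm_num
      · have hb : (bernoulli (n+1) : ℝ) = 0 := by
          rw [bernoulli_eq_bernoulli'_of_ne_one h1,
            bernoulli'_eq_zero_of_odd ho (by omega)]
          simp
        rw [bernoulliFun_endpoints_eq_of_ne_one h1, bernoulliFun_eval_zero, hb, ho.neg_one_pow]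
        ring
  have := hconst.trans h0
  simpa [hh, sub_eq_zero] using this


lemma bern_reflect (n : ℕ) : ∀ x : ℝ,
    bernoulliFun n (1 - x) = (-1 : ℝ) ^ n * bernoulliFun n x := by
  induction n with
  | zero => intro x; simp [bernoulliFun]
  | succ n ih => exact bern_reflect_step n ih

lemma bern_odd_half (k : ℕ) : bernoulliFun (2*k+1) (1/2 : ℝ) = 0 := by
  have := bern_reflect (2*k+1) (1/2)
  have ho : Odd (2*k+1) := ⟨k, by ring⟩
  rw [ho.neg_one_pow] at this
  norm_num at this
  linarith [this]

lemma bern_odd_zero (k : ℕ) : bernoulliFun (2*k+3) (0 : ℝ) = 0 := by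
  rw [bernoulliFun_eval_zero, bernoulli_eq_bernoulli'_of_ne_one (by omega),
    bernoulli'_eq_zero_of_odd ⟨k+1, by ring⟩ (by omega)]
  simp

lemma deriv_bernoulliFun' (n : ℕ) :
    deriv (bernoulliFun n) = fun x => (n : ℝ) * bernoulliFun (n-1) x := by
  funext x
  exact (hasDerivAt_bernoulliFun n x).deriv

lemma bern_sign : ∀ k : ℕ, ∀ x ∈ Set.Ioo (0:ℝ) (1/2),
    0 < (-1 : ℝ) ^ (k+1) * bernoulliFun (2*k+1) x := by
  intro k
  induction k with
  | zero =>
    intro x hx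
    rw [bern1]
    norm_num
    nlinarith [hx.1, hx.2]
  | succ k ih =>
    intro x hx
    have h23 : 2*(k+1)+1 = (2*k+1) + 1 + 1 := by ring
    set f : ℝ → ℝ := fun y => (-1 : ℝ) ^ (k+2) * bernoulliFun (2*(k+1)+1) y with hf
    have hderiv1 : deriv f = fun y =>
        (-1 : ℝ) ^ (k+2) * (((2*(k+1)+1 : ℕ) : ℝ) * bernoulliFun (2*(k+1)) y) := by
      funext y
      exact (((hasDerivAt_bernoulliFun (2*(k+1)+1) y)).const_mul ((-1 : ℝ)^(k+2))).deriv
    have hderiv2 : ∀ y : ℝ, deriv^[2] f y =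
        (-1 : ℝ) ^ (k+2) * (((2*(k+1)+1 : ℕ) : ℝ) * (((2*(k+1) : ℕ) : ℝ) * bernoulliFun (2*k+1) y)) := by
      intro y
      have : deriv^[2] f y = deriv (deriv f) y := rfl
      rw [this, hderiv1]
      have := ((hasDerivAt_bernoulliFun (2*(k+1)) y).const_mul
        (((-1 : ℝ) ^ (k+2)) * ((2*(k+1)+1 : ℕ) : ℝ))).deriv
      have e : 2*(k+1)-1 = 2*k+1 := by omega
      rw [e] at this
      simp only [mul_assoc] at this ⊢
      rw [← this]
    have hconc : StrictConcaveOn ℝ (Icc (0:ℝ) (1/2)) f := by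
      apply strictConcaveOn_of_deriv2_neg (convex_Icc _ _)
        ((continuous_const.mul (bernoulliFun_continuous _)).continuousOn)
      intro y hy
      rw [interior_Icc] at hy
      show deriv^[2] f y < 0
      rw [hderiv2]
      have hpos := ih y hy
      have : (-1 : ℝ) ^ (k+2) = -(-1 : ℝ)^(k+1) := by ring
      rw [this]
      have hc : (0:ℝ) < ((2*(k+1)+1 : ℕ) : ℝ) * ((2*(k+1) : ℕ) : ℝ) := by positivity
      nlinarith
    have hf0 : f 0 = 0 := by
      rw [hf]
      simp only []
      have : 2*(k+1)+1 = 2*k+3 := by ring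
      rw [this, bern_odd_zero]
      ring
    have hfh : f (1/2) = 0 := by
      rw [hf]; simp only []
      rw [bern_odd_half (k+1)]
      ring
    obtain ⟨hx0, hxh⟩ := hx
    have hkey := hconc.2 (Set.left_mem_Icc.2 (by norm_num)) (Set.right_mem_Icc.2 (by norm_num))
      (by norm_num : (0:ℝ) ≠ 1/2) (show (0:ℝ) < 1 - 2*x by linarith) (show (0:ℝ) < 2*x by linarith)
      (show (1 - 2*x) + 2*x = 1 by ring)
    rw [hf0, hfh] at hkey
    simp only [smul_eq_mul, smul_zero, mul_zero, add_zero, zero_add] at hkey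
    have hxeq : 2*x*(1/2 : ℝ) = x := by ring
    rw [hxeq] at hkey
    exact hkey


/-- If `g : [0,1] → ℝ` is continuous, strictly positive and strictly decreasing, then
`∫_0^1 g(x) B_{2k+1}(x) dx` has sign `(-1)^{k-1} = (-1)^{k+1}`, where `B_{2k+1}` is the
`(2k+1)`-st Bernoulli polynomial. -/
theorem integral_bernoulli_sign (k : ℕ) (g : ℝ → ℝ)
    (hg_cont : ContinuousOn g (Set.Icc 0 1))
    (hg_pos : ∀ x ∈ Set.Icc (0:ℝ) 1, 0 < g x)
    (hg_anti : StrictAntiOn g (Set.Icc 0 1)) :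
    0 < (-1 : ℝ) ^ (k+1) *
      ∫ x in (0:ℝ)..1, g x * (Polynomial.aeval x (Polynomial.bernoulli (2*k+1)) : ℝ) := by
  have haeval : ∀ x : ℝ, (Polynomial.aeval x (Polynomial.bernoulli (2*k+1)) : ℝ)
      = bernoulliFun (2*k+1) x := by
    intro x
    rw [bernoulliFun, Polynomial.aeval_def, Polynomial.eval_map]
  simp only [haeval]
  set B := bernoulliFun (2*k+1) with hB
  set F : ℝ → ℝ := fun x => g x * B x with hF
  -- continuity / integrability
  have hFc : ContinuousOn F (Icc 0 1) :=
    hg_cont.mul (bernoulliFun_continuous _).continuousOn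
  have hsub1 : Icc (0:ℝ) (1/2) ⊆ Icc 0 1 := Icc_subset_Icc le_rfl (by norm_num)
  have hsub2 : Icc (1/2:ℝ) 1 ⊆ Icc 0 1 := Icc_subset_Icc (by norm_num) le_rfl
  have hi1 : IntervalIntegrable F MeasureTheory.volume 0 (1/2) := by
    apply ContinuousOn.intervalIntegrable
    rw [uIcc_of_le (by norm_num : (0:ℝ) ≤ 1/2)]
    exact hFc.mono hsub1
  have hi2 : IntervalIntegrable F MeasureTheory.volume (1/2) 1 := by
    apply ContinuousOn.intervalIntegrable
    rw [uIcc_of_le (by norm_num : (1/2:ℝ) ≤ 1)]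
    exact hFc.mono hsub2
  -- split
  have hsplit : ∫ x in (0:ℝ)..1, F x
      = (∫ x in (0:ℝ)..(1/2), F x) + ∫ x in (1/2:ℝ)..1, F x :=
    (integral_add_adjacent_intervals hi1 hi2).symm
  -- reflect the second piece
  have hcomp : ∫ x in (1/2:ℝ)..1, F x = ∫ x in (0:ℝ)..(1/2), F (1 - x) := by
    rw [integral_comp_sub_left F 1]
    norm_num
  have hFrefl : ∀ x : ℝ, F (1 - x) = -(g (1 - x) * B x) := by
    intro x
    have ho : Odd (2*k+1) := ⟨k, by ring⟩
    rw [hF]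
    simp only []
    rw [hB, bern_reflect, ho.neg_one_pow]
    ring
  have hg1c : ContinuousOn (fun x => g (1 - x)) (Icc (0:ℝ) (1/2)) := by
    apply hg_cont.comp (continuous_const.sub continuous_id).continuousOn
    intro x hx
    show 1 - x ∈ Icc (0:ℝ) 1
    exact ⟨by linarith [hx.2], by linarith [hx.1]⟩
  have hi3 : IntervalIntegrable (fun x => F (1 - x)) MeasureTheory.volume 0 (1/2) := by
    apply ContinuousOn.intervalIntegrable
    rw [uIcc_of_le (by norm_num)]
    simp only [hFrefl]
    exact (hg1c.mul (bernoulliFun_continuous _).continuousOn).neg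
  have hcombine : ∫ x in (0:ℝ)..1, F x
      = ∫ x in (0:ℝ)..(1/2), (g x - g (1 - x)) * B x := by
    rw [hsplit, hcomp, ← integral_add hi1 hi3]
    apply integral_congr
    intro x _
    show F x + F (1 - x) = (g x - g (1 - x)) * B x
    rw [hFrefl x, hF]
    ring
  rw [hcombine, ← integral_const_mul]
  apply intervalIntegral_pos_of_pos_on
  · apply ContinuousOn.intervalIntegrable
    rw [uIcc_of_le (by norm_num)]
    exact continuousOn_const.mul
      (((hg_cont.mono hsub1).sub hg1c).mul (bernoulliFun_continuous _).continuousOn)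
  · intro x hx
    obtain ⟨hx0, hxh⟩ := hx
    have hx1 : x ∈ Icc (0:ℝ) 1 := ⟨le_of_lt hx0, by linarith⟩
    have h1x : (1 - x) ∈ Icc (0:ℝ) 1 := ⟨by linarith, by linarith⟩
    have hlt : g (1 - x) < g x := hg_anti hx1 h1x (by linarith)
    have hBpos := bern_sign k x ⟨hx0, hxh⟩
    calc (0:ℝ) = (g x - g (1-x)) * 0 := by ring
    _ < (g x - g (1-x)) * ((-1:ℝ)^(k+1) * B x) := by
        apply mul_lt_mul_of_pos_left hBpos (by linarith)
    _ = (-1:ℝ)^(k+1) * ((g x - g (1-x)) * B x) := by ring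
  · norm_num
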